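/- Let H : ℝ^d × ℝ^d → ℝ satisfy |H(x,λ₁) − H(x,λ₂)| ≤ C₁|λ₁−λ₂| for all x, λ₁, λ₂, let R > 0, K > 0, and define H̃(x,λ) = H(x,λ) − K(max(|λ| − R, 0))². Then for every ε > 0 there exists K₀ such that for all K ≥ K₀, every maximizer λ* of λ ↦ −α·λ + H̃(x,λ) (for any x, α ∈ ℝ^d with |α| ≤ C₁) satisfies |λ*| ≤ R + ε. -/

import Mathlib

/-- penalizing the Hamiltonian quadratically outside the ball of
radius `R` localizes maximizers of the conjugate problem (with `‖α‖ ≤ C₁`) to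
the ball of radius `R + ε`, for the penalty constant `K` large enough. -/
theorem stmt14 {d : ℕ} (H : EuclideanSpace ℝ (Fin d) → EuclideanSpace ℝ (Fin d) → ℝ)
    (C₁ R : ℝ) (hR : 0 < R)
    (hLip : ∀ x l₁ l₂ : EuclideanSpace ℝ (Fin d), |H x l₁ - H x l₂| ≤ C₁ * ‖l₁ - l₂‖) :
    ∀ ε : ℝ, 0 < ε → ∃ K₀ : ℝ, 0 < K₀ ∧ ∀ K : ℝ, K₀ ≤ K →
      ∀ x α lstar : EuclideanSpace ℝ (Fin d), ‖α‖ ≤ C₁ →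
        (∀ l : EuclideanSpace ℝ (Fin d),
          -(inner ℝ α l : ℝ) + (H x l - K * max (‖l‖ - R) 0 ^ 2) ≤
            -(inner ℝ α lstar : ℝ) + (H x lstar - K * max (‖lstar‖ - R) 0 ^ 2)) →
        ‖lstar‖ ≤ R + ε := by
  intro ε hε
  refine ⟨max (2 * C₁ * (ε + R) / ε ^ 2) 0 + 1, by positivity, ?_⟩
  intro K hK x α lstar hα hmax
  have hC : 0 ≤ C₁ := (norm_nonneg α).trans hα
  have hK0 : 2 * C₁ * (ε + R) / ε ^ 2 + 1 ≤ K :=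
    le_trans (by simp [le_max_left]) hK
  have hKpos : 0 < K :=
    lt_of_lt_of_le one_pos (le_trans (le_add_of_nonneg_left (le_max_right _ 0)) hK)
  by_contra hcon
  push_neg at hcon
  set m : ℝ := max (‖lstar‖ - R) 0 with hm
  have hmε : ε < m := lt_max_of_lt_left (by linarith)
  have hnorm : ‖lstar‖ = m + R := by
    rw [hm, max_eq_left (by linarith)]; ring
  -- compare with l = 0
  have h0 := hmax 0
  simp only [inner_zero_right, norm_zero, neg_zero, zero_add] at h0
  rw [show max (0 - R) 0 = 0 by rw [max_eq_right]; linarith] at h0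
  have hip : -(inner ℝ α lstar : ℝ) ≤ C₁ * ‖lstar‖ := by
    calc -(inner ℝ α lstar : ℝ) ≤ |(inner ℝ α lstar : ℝ)| := neg_le_abs _
    _ ≤ ‖α‖ * ‖lstar‖ := abs_real_inner_le_norm α lstar
    _ ≤ C₁ * ‖lstar‖ := by
        exact mul_le_mul_of_nonneg_right hα (norm_nonneg _)
  have hH : H x lstar - H x 0 ≤ C₁ * ‖lstar‖ := by
    have := (le_abs_self _).trans (hLip x lstar 0)
    simpa using this
  have key : K * m ^ 2 ≤ 2 * C₁ * ‖lstar‖ := by linarith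
  have hmpos : 0 < m := lt_trans hε hmε
  -- derive contradiction
  have hεK : 0 < ε ^ 2 := by positivity
  have hD : 2 * C₁ * (ε + R) ≤ (K - 1) * ε ^ 2 :=
    (div_le_iff₀ hεK).mp (by linarith)
  rw [hnorm] at key
  have hRm : 2 * C₁ * R * ε ≤ 2 * C₁ * R * m :=
    mul_le_mul_of_nonneg_left hmε.le (by positivity)
  nlinarith [mul_le_mul_of_nonneg_right key hε.le,
    mul_le_mul_of_nonneg_right hD hmpos.le,
    mul_pos (mul_pos (mul_pos hKpos hmpos) hε) (sub_pos.mpr hmε),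
    mul_pos hεK hmpos]
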